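/- There exists a sign-reversing involution on the set of ordered set partitions of [n] other than the partition into singletons in natural order ({1},{2},...,{n}); here the sign of an ordered partition into k blocks is (-1)^{n+k}. Consequently, the set of ordered partitions of [n] with sign +1 (i.e., with n ≡ k mod 2) other than the identity partition is equinumerous with the set of ordered partitions with sign −1. -/
import Mathlib

/-- `l` is an ordered set partition of `Fin n`: a list of pairwise disjoint nonempty
subsets whose union is everything. -/
def IsOSP {n : ℕ} (l : List (Finset (Fin n))) : Prop :=
  (∀ B ∈ l, B.Nonempty) ∧ l.Pairwise Disjoint ∧ l.foldr (· ∪ ·) ∅ = Finset.univ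

/-- The identity ordered partition `[{1},{2},...,{n}]`. -/
def identOSP (n : ℕ) : List (Finset (Fin n)) := (List.finRange n).map fun i => {i}

/-- The sign of an ordered partition of an `n`-set into `k` blocks is `(-1)^(n+k)`. -/
def ospSign (n : ℕ) (l : List (Finset (Fin n))) : ℤ := (-1) ^ (n + l.length)

namespace OSPAux

variable {n : ℕ}

lemma mem_foldr_union {l : List (Finset (Fin n))} {x : Fin n} :
    x ∈ l.foldr (· ∪ ·) ∅ ↔ ∃ B ∈ l, x ∈ B := by
  induction l with
  | nil => simp
  | cons B t ih => simp [ih]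

lemma subset_foldr {l : List (Finset (Fin n))} {B : Finset (Fin n)} (h : B ∈ l) :
    B ⊆ l.foldr (· ∪ ·) ∅ := fun x hx => mem_foldr_union.mpr ⟨B, h, hx⟩

lemma disjoint_foldr {l : List (Finset (Fin n))} {B : Finset (Fin n)}
    (h : ∀ C ∈ l, Disjoint B C) : Disjoint B (l.foldr (· ∪ ·) ∅) := by
  induction l with
  | nil => simp
  | cons C t ih =>
      simp only [List.foldr_cons, Finset.disjoint_union_right]
      exact ⟨h C (by simp), ih fun C hC => h C (by simp [hC])⟩

lemma osp_nil_iff {l : List (Finset (Fin n))} :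
    ((∀ B ∈ l, B.Nonempty) ∧ l.Pairwise Disjoint ∧ l.foldr (· ∪ ·) ∅ = ∅) ↔ l = [] := by
  constructor
  · rintro ⟨h1, _, h3⟩
    cases l with
    | nil => rfl
    | cons B t =>
        exfalso
        obtain ⟨x, hx⟩ := h1 B (by simp)
        have hx2 : x ∈ (B :: t).foldr (· ∪ ·) ∅ := subset_foldr (by simp) hx
        rw [h3] at hx2
        simp at hx2
  · rintro rfl; simp

/-- All ordered set partitions of `s`, computed with fuel `k`. -/
def ospSet (n : ℕ) : ℕ → Finset (Fin n) → Finset (List (Finset (Fin n)))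
  | 0, _ => {[]}
  | k + 1, s =>
      if s = ∅ then {[]} else
        (s.powerset.filter (·.Nonempty)).biUnion
          (fun B => (ospSet n k (s \ B)).image (B :: ·))

lemma mem_ospSet {k : ℕ} {s : Finset (Fin n)} (hk : s.card ≤ k)
    {l : List (Finset (Fin n))} :
    l ∈ ospSet n k s ↔
      (∀ B ∈ l, B.Nonempty) ∧ l.Pairwise Disjoint ∧ l.foldr (· ∪ ·) ∅ = s := by
  induction k generalizing s l with
  | zero =>
      have hs : s = ∅ := Finset.card_eq_zero.mp (Nat.le_zero.mp hk)
      subst hs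
      simp only [ospSet, Finset.mem_singleton]
      exact osp_nil_iff.symm
  | succ k ih =>
      by_cases hs : s = ∅
      · subst hs
        rw [ospSet, if_pos rfl, Finset.mem_singleton]
        exact osp_nil_iff.symm
      · rw [ospSet, if_neg hs]
        simp only [Finset.mem_biUnion, Finset.mem_image, Finset.mem_filter,
          Finset.mem_powerset]
        constructor
        · rintro ⟨B, ⟨hBs, hBne⟩, t, ht, rfl⟩
          have hcard : (s \ B).card ≤ k := by
            have h1 : 1 ≤ B.card := Finset.card_pos.mpr hBne
            have := Finset.card_sdiff_of_subset hBs
            omega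
          obtain ⟨ht1, ht2, ht3⟩ := (ih hcard).mp ht
          refine ⟨?_, ?_, ?_⟩
          · intro C hC
            rcases List.mem_cons.mp hC with rfl | hC
            · exact hBne
            · exact ht1 C hC
          · rw [List.pairwise_cons]
            refine ⟨fun C hC => ?_, ht2⟩
            have : C ⊆ s \ B := ht3 ▸ subset_foldr hC
            exact Finset.disjoint_sdiff.mono_right this
          · simp only [List.foldr_cons, ht3]
            exact Finset.union_sdiff_of_subset hBs
        · rintro ⟨h1, h2, h3⟩
          cases l with
          | nil => exact absurd h3.symm (by simpa using hs)
          | cons B t =>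
              have hBs : B ⊆ s := h3 ▸ subset_foldr (by simp)
              have hBne : B.Nonempty := h1 B (by simp)
              have hdisj : Disjoint B (t.foldr (· ∪ ·) ∅) :=
                disjoint_foldr (List.pairwise_cons.mp h2).1
              have ht3 : t.foldr (· ∪ ·) ∅ = s \ B := by
                have : B ∪ t.foldr (· ∪ ·) ∅ = s := h3
                rw [← this, Finset.union_sdiff_cancel_left hdisj]
              have hcard : (s \ B).card ≤ k := by
                have h1' : 1 ≤ B.card := Finset.card_pos.mpr hBne
                have := Finset.card_sdiff_of_subset hBs
                omega
              exact ⟨B, ⟨hBs, hBne⟩, t,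
                (ih hcard).mpr ⟨fun C hC => h1 C (by simp [hC]),
                  (List.pairwise_cons.mp h2).2, ht3⟩, rfl⟩

lemma sum_ospSet {k : ℕ} {s : Finset (Fin n)} (hk : s.card ≤ k) :
    ∑ l ∈ ospSet n k s, (-1 : ℤ) ^ l.length = (-1) ^ s.card := by
  induction k generalizing s with
  | zero =>
      have hs : s = ∅ := Finset.card_eq_zero.mp (Nat.le_zero.mp hk)
      subst hs; simp [ospSet]
  | succ k ih =>
      by_cases hs : s = ∅
      · subst hs; simp [ospSet]
      · rw [ospSet, if_neg hs]
        rw [Finset.sum_biUnion ?hdisj]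
        case hdisj =>
          intro B _ B' _ hne
          simp only [Function.onFun]
          rw [Finset.disjoint_left]
          rintro l hl hl'
          obtain ⟨t, _, rfl⟩ := Finset.mem_image.mp hl
          obtain ⟨t', _, heq⟩ := Finset.mem_image.mp hl'
          exact hne (List.head_eq_of_cons_eq heq.symm)
        have hinner : ∀ B ∈ s.powerset.filter (·.Nonempty),
            ∑ l ∈ (ospSet n k (s \ B)).image (B :: ·), (-1 : ℤ) ^ l.length
              = -(-1 : ℤ) ^ (s \ B).card := by
          intro B hB
          obtain ⟨hBs, hBne⟩ := Finset.mem_filter.mp hB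
          rw [Finset.mem_powerset] at hBs
          have hcard : (s \ B).card ≤ k := by
            have h1 : 1 ≤ B.card := Finset.card_pos.mpr hBne
            have := Finset.card_sdiff_of_subset hBs
            omega
          rw [Finset.sum_image (g := (B :: ·)) (fun a _ b _ h => List.cons_injective h)]
          calc ∑ t ∈ ospSet n k (s \ B), (-1 : ℤ) ^ (B :: t).length
              = ∑ t ∈ ospSet n k (s \ B), (-1 : ℤ) * (-1) ^ t.length := by
                apply Finset.sum_congr rfl
                intro t _
                rw [List.length_cons, pow_succ, mul_comm]
            _ = -(-1 : ℤ) ^ (s \ B).card := by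
                rw [← Finset.mul_sum, ih hcard]; ring
        rw [Finset.sum_congr rfl hinner]
        have hsum : ∑ B ∈ s.powerset.filter (·.Nonempty), (-1 : ℤ) ^ (s \ B).card
            = -(-1 : ℤ) ^ s.card := by
          have hfilter : s.powerset.filter (·.Nonempty) = s.powerset.erase ∅ := by
            ext B
            simp [Finset.mem_filter, Finset.mem_erase, Finset.nonempty_iff_ne_empty,
              and_comm]
          rw [hfilter]
          have hins : ((-1 : ℤ) ^ (s \ ∅).card) + ∑ B ∈ s.powerset.erase ∅,
              (-1 : ℤ) ^ (s \ B).card = ∑ B ∈ s.powerset, (-1 : ℤ) ^ (s \ B).card :=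
            Finset.add_sum_erase s.powerset (fun B => (-1 : ℤ) ^ (s \ B).card)
              (Finset.empty_mem_powerset s)
          have hzero : ∑ B ∈ s.powerset, (-1 : ℤ) ^ (s \ B).card = 0 := by
            rw [Finset.sum_nbij' (t := s.powerset) (g := fun B => (-1 : ℤ) ^ B.card)
              (fun B => s \ B) (fun B => s \ B)
              (fun B _ => Finset.mem_powerset.mpr (Finset.sdiff_subset))
              (fun B _ => Finset.mem_powerset.mpr (Finset.sdiff_subset))
              (fun B hB => Finset.sdiff_sdiff_eq_self (Finset.mem_powerset.mp hB))
              (fun B hB => Finset.sdiff_sdiff_eq_self (Finset.mem_powerset.mp hB))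
              (fun B _ => rfl)]
            rw [Finset.sum_powerset_neg_one_pow_card, if_neg hs]
          rw [Finset.sdiff_empty] at hins
          rw [hzero] at hins
          linarith
        rw [Finset.sum_neg_distrib, hsum, neg_neg]

lemma isOSP_ident : IsOSP (identOSP n) := by
  refine ⟨?_, ?_, ?_⟩
  · intro B hB
    simp only [identOSP, List.mem_map] at hB
    obtain ⟨i, _, rfl⟩ := hB
    exact ⟨i, Finset.mem_singleton_self i⟩
  · rw [identOSP, List.pairwise_map]
    exact (List.nodup_finRange n).imp (fun h => Finset.disjoint_singleton.mpr h)
  · ext x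
    simp only [mem_foldr_union, identOSP, List.mem_map, Finset.mem_univ, iff_true]
    exact ⟨{x}, ⟨x, List.mem_finRange x, rfl⟩, Finset.mem_singleton_self x⟩

lemma length_ident : (identOSP n).length = n := by simp [identOSP]

lemma ospSign_ident : ospSign n (identOSP n) = 1 := by
  rw [ospSign, length_ident]
  exact Even.neg_one_pow ⟨n, rfl⟩

lemma ospSign_dichotomy (l : List (Finset (Fin n))) :
    ospSign n l = 1 ∨ ospSign n l = -1 := by
  rcases Nat.even_or_odd (n + l.length) with h | h
  · exact Or.inl (h.neg_one_pow)
  · exact Or.inr (h.neg_one_pow)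

lemma sum_ospSign :
    ∑ l ∈ ospSet n n Finset.univ, ospSign n l = 1 := by
  have h : ∑ l ∈ ospSet n n Finset.univ, (-1 : ℤ) ^ l.length = (-1) ^ n := by
    have := sum_ospSet (n := n) (k := n) (s := Finset.univ) (by simp)
    simpa using this
  calc ∑ l ∈ ospSet n n Finset.univ, ospSign n l
      = ∑ l ∈ ospSet n n Finset.univ, (-1 : ℤ) ^ n * (-1) ^ l.length := by
        apply Finset.sum_congr rfl; intro l _; rw [ospSign, pow_add]
    _ = (-1 : ℤ) ^ n * (-1) ^ n := by rw [← Finset.mul_sum, h]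
    _ = 1 := by rw [← pow_add]; exact Even.neg_one_pow ⟨n, rfl⟩

lemma mem_ospSet_univ {l : List (Finset (Fin n))} :
    l ∈ ospSet n n Finset.univ ↔ IsOSP l :=
  mem_ospSet (by simp)

lemma card_filter_eq :
    ((ospSet n n Finset.univ).filter
        (fun l => l ≠ identOSP n ∧ ospSign n l = 1)).card =
    ((ospSet n n Finset.univ).filter
        (fun l => l ≠ identOSP n ∧ ospSign n l = -1)).card := by
  classical
  set F := ospSet n n Finset.univ with hF
  have hident : identOSP n ∈ F := mem_ospSet_univ.mpr isOSP_ident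
  have herase : ∑ l ∈ F.erase (identOSP n), ospSign n l = 0 := by
    have := Finset.add_sum_erase F (ospSign n) hident
    rw [sum_ospSign, ospSign_ident] at this
    linarith
  have hsplit : ∑ l ∈ (F.erase (identOSP n)).filter (fun l => ospSign n l = 1),
        ospSign n l
      + ∑ l ∈ (F.erase (identOSP n)).filter (fun l => ¬ ospSign n l = 1),
        ospSign n l = 0 := by
    rw [Finset.sum_filter_add_sum_filter_not, herase]
  have h1 : ∑ l ∈ (F.erase (identOSP n)).filter (fun l => ospSign n l = 1),
      ospSign n l
      = ((F.erase (identOSP n)).filter (fun l => ospSign n l = 1)).card := by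
    rw [Finset.sum_congr rfl (fun l hl => (Finset.mem_filter.mp hl).2)]
    simp
  have h2 : ∑ l ∈ (F.erase (identOSP n)).filter (fun l => ¬ ospSign n l = 1),
      ospSign n l
      = -(((F.erase (identOSP n)).filter (fun l => ¬ ospSign n l = 1)).card : ℤ) := by
    rw [Finset.sum_congr rfl (fun l hl =>
      ((ospSign_dichotomy l).resolve_left (Finset.mem_filter.mp hl).2 : ospSign n l = -1))]
    simp
  have key : (((F.erase (identOSP n)).filter (fun l => ospSign n l = 1)).card : ℤ)
      = (((F.erase (identOSP n)).filter (fun l => ¬ ospSign n l = 1)).card : ℤ) := by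
    rw [h1, h2] at hsplit; linarith
  have e1 : F.filter (fun l => l ≠ identOSP n ∧ ospSign n l = 1)
      = (F.erase (identOSP n)).filter (fun l => ospSign n l = 1) := by
    ext l
    simp only [Finset.mem_filter, Finset.mem_erase]
    tauto
  have e2 : F.filter (fun l => l ≠ identOSP n ∧ ospSign n l = -1)
      = (F.erase (identOSP n)).filter (fun l => ¬ ospSign n l = 1) := by
    ext l
    simp only [Finset.mem_filter, Finset.mem_erase]
    constructor
    · rintro ⟨h, hne, hs⟩
      exact ⟨⟨hne, h⟩, by rw [hs]; decide⟩
    · rintro ⟨⟨hne, h⟩, hs⟩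
      exact ⟨h, hne, (ospSign_dichotomy l).resolve_left hs⟩
  rw [e1, e2]
  exact_mod_cast key

lemma natCard_eq_filterCard (p : List (Finset (Fin n)) → Prop) [DecidablePred p] :
    Nat.card {l : List (Finset (Fin n)) // IsOSP l ∧ p l}
      = ((ospSet n n Finset.univ).filter (fun l => p l)).card := by
  have h : ∀ l, (IsOSP l ∧ p l) ↔
      l ∈ (ospSet n n Finset.univ).filter (fun l => p l) := by
    intro l
    rw [Finset.mem_filter, mem_ospSet_univ]
  rw [Nat.card_congr (Equiv.subtypeEquivRight h), Nat.card_eq_fintype_card,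
    Fintype.card_coe]

lemma natCard_main :
    Nat.card {l : List (Finset (Fin n)) // IsOSP l ∧ l ≠ identOSP n ∧ ospSign n l = 1}
      = Nat.card {l : List (Finset (Fin n)) //
          IsOSP l ∧ l ≠ identOSP n ∧ ospSign n l = -1} := by
  rw [natCard_eq_filterCard (fun l => l ≠ identOSP n ∧ ospSign n l = 1),
    natCard_eq_filterCard (fun l => l ≠ identOSP n ∧ ospSign n l = -1)]
  exact card_filter_eq

/-- Abstract construction of a sign-reversing involution from a cardinality equality. -/
lemma exists_involution {X : Type*} [Finite X] (g : X → ℤ)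
    (hg : ∀ x, g x = 1 ∨ g x = -1)
    (hcard : Nat.card {x // g x = 1} = Nat.card {x // g x = -1}) :
    ∃ f : X → X, Function.Involutive f ∧ ∀ x, g (f x) = - g x := by
  classical
  have : Fintype X := Fintype.ofFinite X
  have e : {x // g x = 1} ≃ {x // g x = -1} :=
    Fintype.equivOfCardEq (by
      rw [← Nat.card_eq_fintype_card, ← Nat.card_eq_fintype_card]; exact hcard)
  refine ⟨fun x => if h : g x = 1 then (e ⟨x, h⟩ : {x // g x = -1}).1
      else (e.symm ⟨x, (hg x).resolve_left h⟩).1, ?_, ?_⟩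
  · intro x
    dsimp only
    by_cases h : g x = 1
    · rw [dif_pos h]
      have h2 : g ((e ⟨x, h⟩).1) = -1 := (e ⟨x, h⟩).2
      rw [dif_neg (by rw [h2]; decide)]
      have h3 : (⟨(e ⟨x, h⟩).1, _⟩ : {x // g x = -1}) = e ⟨x, h⟩ := Subtype.ext rfl
      rw [h3, Equiv.symm_apply_apply]
    · rw [dif_neg h]
      have hx : g x = -1 := (hg x).resolve_left h
      have h2 : g ((e.symm ⟨x, hx⟩).1) = 1 := (e.symm ⟨x, hx⟩).2
      rw [dif_pos h2]
      have h3 : (⟨(e.symm ⟨x, hx⟩).1, h2⟩ : {x // g x = 1}) = e.symm ⟨x, hx⟩ :=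
        Subtype.ext rfl
      rw [h3, Equiv.apply_symm_apply]
  · intro x
    dsimp only
    by_cases h : g x = 1
    · rw [dif_pos h, h]
      exact (e ⟨x, h⟩).2
    · have hx : g x = -1 := (hg x).resolve_left h
      rw [dif_neg h]
      have h2 : g ((e.symm ⟨x, hx⟩).1) = 1 := (e.symm ⟨x, hx⟩).2
      rw [h2, hx]
      norm_num

instance finiteX : Finite {l : List (Finset (Fin n)) // IsOSP l ∧ l ≠ identOSP n} := by
  classical
  have h : ∀ l : List (Finset (Fin n)), (IsOSP l ∧ l ≠ identOSP n) ↔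
      l ∈ (ospSet n n Finset.univ).filter (fun l => l ≠ identOSP n) := by
    intro l; rw [Finset.mem_filter, mem_ospSet_univ]
  exact Finite.of_equiv _ (Equiv.subtypeEquivRight h).symm

end OSPAux

theorem sign_reversing_involution_on_OSP (n : ℕ) :
    (∃ f : {l : List (Finset (Fin n)) // IsOSP l ∧ l ≠ identOSP n} →
           {l : List (Finset (Fin n)) // IsOSP l ∧ l ≠ identOSP n},
      Function.Involutive f ∧ ∀ p, ospSign n (f p).1 = - ospSign n p.1) ∧
    Nat.card {l : List (Finset (Fin n)) // IsOSP l ∧ l ≠ identOSP n ∧ ospSign n l = 1} =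
      Nat.card {l : List (Finset (Fin n)) // IsOSP l ∧ l ≠ identOSP n ∧ ospSign n l = -1} := by
  classical
  have hmain := OSPAux.natCard_main (n := n)
  refine ⟨?_, hmain⟩
  set X := {l : List (Finset (Fin n)) // IsOSP l ∧ l ≠ identOSP n} with hX
  have hcard : Nat.card {p : X // ospSign n p.1 = 1}
      = Nat.card {p : X // ospSign n p.1 = -1} := by
    have e1 : {p : X // ospSign n p.1 = 1} ≃
        {l : List (Finset (Fin n)) // IsOSP l ∧ l ≠ identOSP n ∧ ospSign n l = 1} :=
      (Equiv.subtypeSubtypeEquivSubtypeInter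
        (fun l => IsOSP l ∧ l ≠ identOSP n) (fun l => ospSign n l = 1)).trans
        (Equiv.subtypeEquivRight (fun l => by tauto))
    have e2 : {p : X // ospSign n p.1 = -1} ≃
        {l : List (Finset (Fin n)) // IsOSP l ∧ l ≠ identOSP n ∧ ospSign n l = -1} :=
      (Equiv.subtypeSubtypeEquivSubtypeInter
        (fun l => IsOSP l ∧ l ≠ identOSP n) (fun l => ospSign n l = -1)).trans
        (Equiv.subtypeEquivRight (fun l => by tauto))
    rw [Nat.card_congr e1, Nat.card_congr e2]
    exact hmain
  obtain ⟨f, hf1, hf2⟩ := OSPAux.exists_involution (X := X)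
    (fun p => ospSign n p.1) (fun p => OSPAux.ospSign_dichotomy p.1) hcard
  exact ⟨f, hf1, hf2⟩
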